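/- Let F be a monic real polynomial with F(x) > 0 for all x > 0. Then there exists a nonzero polynomial G with nonnegative coefficients such that the product F·G has all coefficients nonnegative. -/
import Mathlib
open Polynomial
set_option maxHeartbeats 1000000

lemma amgm_aux {P Q T : ℝ} (hP : 0 ≤ P) (hQ : 0 ≤ Q) (hT : 0 ≤ T) (h : T^2 ≤ 4*(P*Q)) :
    T ≤ P + Q := by nlinarith [sq_nonneg (P - Q)]

lemma middle_aux {c β M J U : ℝ} (hc : 0 < c) (hβ : 0 < β) (hM1 : 1 ≤ M)
    (hMsq : β^2*M^2 ≤ 4*c*(M-1)^2) (hjM : M ≤ J+1) (huM : M ≤ U)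
    (hJ0 : 0 ≤ J) (hU0 : 0 ≤ U) :
    β*((U+1)*(J+2)) ≤ (J+1)*(J+2) + c*(U*(U+1)) := by
  have h3 : (M-1)*(J+2) ≤ (J+1)*M := by nlinarith
  have h4 : (M-1)*(U+1) ≤ U*M := by nlinarith
  have h5 : ((M-1)*(J+2))*((M-1)*(U+1)) ≤ ((J+1)*M)*(U*M) :=
    mul_le_mul h3 h4 (mul_nonneg (by linarith) (by linarith))
      (mul_nonneg (by linarith) (by linarith))
  have hb1 := mul_le_mul_of_nonneg_right hMsq (sq_nonneg ((U+1)*(J+2)))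
  have hb2 := mul_le_mul_of_nonneg_left h5 (by positivity : (0:ℝ) ≤ 4*c*((J+2)*(U+1)))
  have hM2 : (0:ℝ) < M^2 := by positivity
  have h6 : (β*((U+1)*(J+2)))^2 * M^2 ≤ (4*(((J+1)*(J+2)) * (c*(U*(U+1))))) * M^2 := by
    nlinarith [hb1, hb2]
  have h7 : (β*((U+1)*(J+2)))^2 ≤ 4*(((J+1)*(J+2)) * (c*(U*(U+1)))) :=
    le_of_mul_le_mul_right h6 hM2
  exact amgm_aux (by positivity) (by positivity) (by positivity) h7

lemma smallj_aux {c β M J U N : ℝ} (hc : 0 < c) (hβ : 0 < β) (hM1 : 1 ≤ M)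
    (hJM : J + 2 ≤ M) (hn : c*M + β*M*c + β*M + β + c ≤ N*c) (hN : N = J + 1 + U)
    (hJ0 : 0 ≤ J) (hU0 : 0 ≤ U) :
    β*((U+1)*(J+2)) ≤ (J+1)*(J+2) + c*(U*(U+1)) := by
  have hcJ : c*(J+2) ≤ c*M := mul_le_mul_of_nonneg_left hJM hc.le
  have hβJ : β*(J+2) ≤ β*M := mul_le_mul_of_nonneg_left hJM hβ.le
  have hβMc : (0:ℝ) ≤ β*M*c := by positivity
  have hcn : c*N = c*J + c + c*U := by rw [hN]; ring
  have hA : β*(J+2) ≤ c*U := by nlinarith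
  nlinarith [mul_le_mul_of_nonneg_right hA (by linarith : (0:ℝ) ≤ U+1),
    mul_nonneg (by linarith : (0:ℝ) ≤ J+1) (by linarith : (0:ℝ) ≤ J+2)]

lemma smallu_aux {c β M J U N : ℝ} (hc : 0 < c) (hβ : 0 < β) (hM1 : 1 ≤ M)
    (hUM : U + 1 ≤ M) (hn : c*M + β*M*c + β*M + β + c ≤ N*c) (hN : N = J + 1 + U)
    (hJ0 : 0 ≤ J) (hU0 : 0 ≤ U) :
    β*((U+1)*(J+2)) ≤ (J+1)*(J+2) + c*(U*(U+1)) := by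
  have hβM : (0:ℝ) ≤ β*M := by positivity
  have hB : M + β*M ≤ N := by
    by_contra hcon
    push_neg at hcon
    have h9 := mul_lt_mul_of_pos_right hcon hc
    nlinarith
  have hβU : β*(U+1) ≤ β*M := mul_le_mul_of_nonneg_left hUM hβ.le
  have hA : β*(U+1) ≤ J+1 := by linarith
  nlinarith [mul_le_mul_of_nonneg_right hA (by linarith : (0:ℝ) ≤ J+2),
    mul_nonneg (mul_nonneg hc.le hU0) (by linarith : (0:ℝ) ≤ U+1)]

lemma final_aux {x0 x1 x2 β c J U : ℝ} (hc1 : x2*(J+2) = x1*U) (hc2 : x1*(J+1) = x0*(U+1))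
    (hr : 0 < x1) (hJ0 : 0 ≤ J) (hU0 : 0 ≤ U)
    (key : β*((U+1)*(J+2)) ≤ (J+1)*(J+2) + c*(U*(U+1))) :
    0 ≤ x0 + (-β)*x1 + c*x2 := by
  have hpos' : (0:ℝ) < (U+1)*(J+2) := by nlinarith
  have hid : (x0 + (-β)*x1 + c*x2) * ((U+1)*(J+2))
      = x1 * ((J+1)*(J+2) + c*(U*(U+1)) - β*((U+1)*(J+2))) := by
    linear_combination (-(J+2)) * hc2 + c*(U+1) * hc1
  have h8 : 0 ≤ (x0 + (-β)*x1 + c*x2) * ((U+1)*(J+2)) := by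
    rw [hid]; exact mul_nonneg hr.le (by linarith)
  exact le_of_mul_le_mul_right (by rw [zero_mul]; exact h8) hpos'

lemma quad_key (b c : ℝ) (hd : b^2 < 4*c) :
    ∃ n : ℕ, (0 ≤ b + c * n) ∧
      ∀ j : ℕ, 0 ≤ (n.choose j : ℝ) + b * n.choose (j+1) + c * n.choose (j+2) := by
  have hc : 0 < c := by nlinarith [sq_nonneg b]
  rcases le_or_gt 0 b with hb | hb
  · refine ⟨0, by simpa using hb, fun j => ?_⟩
    refine add_nonneg (add_nonneg (Nat.cast_nonneg _) ?_) ?_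
    · exact mul_nonneg hb (Nat.cast_nonneg _)
    · exact mul_nonneg hc.le (Nat.cast_nonneg _)
  set β : ℝ := -b with hβdef
  have hβ : 0 < β := by simp only [hβdef]; linarith
  have hβb : b = -β := by rw [hβdef]; ring
  have hs : 0 < Real.sqrt c := Real.sqrt_pos.mpr hc
  set s := Real.sqrt c with hsdef
  have hs2 : s^2 = c := Real.sq_sqrt hc.le
  have hβs : β < 2*s := by nlinarith
  obtain ⟨M, hMge⟩ := exists_nat_ge (2*s/(2*s-β) + 1)
  have hM1 : (1:ℝ) ≤ (M:ℝ) := by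
    have : (0:ℝ) ≤ 2*s/(2*s-β) := div_nonneg (by linarith) (by linarith)
    linarith
  have hMkey : β * M ≤ 2*s*((M:ℝ)-1) := by
    have h1 : 2*s/(2*s-β) ≤ (M:ℝ) - 1 := by linarith
    have h2 : 2*s ≤ ((M:ℝ)-1) * (2*s-β) := by
      rw [div_le_iff₀ (by linarith)] at h1; linarith
    nlinarith
  have hMsq : β^2 * (M:ℝ)^2 ≤ 4*c*((M:ℝ)-1)^2 := by
    nlinarith [mul_nonneg hβ.le (Nat.cast_nonneg M : (0:ℝ) ≤ M)]
  clear hMkey hMge hβs hs2 hs hsdef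
  obtain ⟨n, hnge⟩ := exists_nat_ge ((c*M + β*M*c + β*M + β + c)/c)
  have hn' : c*M + β*M*c + β*M + β + c ≤ (n:ℝ)*c := by
    rw [div_le_iff₀ hc] at hnge; linarith
  clear hnge
  refine ⟨n, ?_, ?_⟩
  · rw [hβb]
    have hβM : (0:ℝ) ≤ β*M := by positivity
    have hβMc : (0:ℝ) ≤ β*M*c := by positivity
    have hcM : (0:ℝ) ≤ c*M := by positivity
    nlinarith
  intro j
  rcases le_or_gt (j+1) n with h | h
  · obtain ⟨u, hu⟩ : ∃ u, n = (j+1)+u := ⟨n - (j+1), by omega⟩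
    have hc1 : (n.choose (j+2) : ℝ) * ((j:ℝ)+2) = (n.choose (j+1) : ℝ) * u := by
      have h0 := Nat.choose_succ_right_eq n (j+1)
      have h1 : n - (j+1) = u := by omega
      rw [h1] at h0
      exact_mod_cast congrArg (Nat.cast : ℕ → ℝ) h0
    have hc2 : (n.choose (j+1) : ℝ) * ((j:ℝ)+1) = (n.choose j : ℝ) * ((u:ℝ)+1) := by
      have h0 := Nat.choose_succ_right_eq n j
      have h1 : n - j = u + 1 := by omega
      rw [h1] at h0
      exact_mod_cast congrArg (Nat.cast : ℕ → ℝ) h0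
    have hr : (0:ℝ) < n.choose (j+1) := by exact_mod_cast Nat.choose_pos h
    have hncast : (n:ℝ) = (j:ℝ) + 1 + u := by exact_mod_cast congrArg (Nat.cast : ℕ → ℝ) hu
    have hJ0 : (0:ℝ) ≤ j := Nat.cast_nonneg j
    have hU0 : (0:ℝ) ≤ u := Nat.cast_nonneg u
    have key : β*(((u:ℝ)+1)*((j:ℝ)+2)) ≤ ((j:ℝ)+1)*((j:ℝ)+2) + c*((u:ℝ)*((u:ℝ)+1)) := by
      rcases le_or_gt (j+2) M with hja | hja
      · exact smallj_aux hc hβ hM1 (by exact_mod_cast hja) hn' hncast hJ0 hU0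
      rcases le_or_gt (u+1) M with hub | hub
      · exact smallu_aux hc hβ hM1 (by exact_mod_cast hub) hn' hncast hJ0 hU0
      · exact middle_aux hc hβ hM1 hMsq (by exact_mod_cast (by omega : M ≤ j+1))
          (by exact_mod_cast (by omega : M ≤ u)) hJ0 hU0
    rw [hβb]
    exact final_aux hc1 hc2 hr hJ0 hU0 key
  · have h1 : n.choose (j+1) = 0 := Nat.choose_eq_zero_of_lt h
    have h2 : n.choose (j+2) = 0 := Nat.choose_eq_zero_of_lt (by omega)
    rw [h1, h2]
    simp only [Nat.cast_zero, mul_zero, add_zero]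
    exact Nat.cast_nonneg _

lemma coeff_mul_nonneg {p q : ℝ[X]} (hp : ∀ k, 0 ≤ p.coeff k) (hq : ∀ k, 0 ≤ q.coeff k) :
    ∀ k, 0 ≤ (p * q).coeff k := by
  intro k
  rw [Polynomial.coeff_mul]
  exact Finset.sum_nonneg fun x _ => mul_nonneg (hp _) (hq _)

lemma quad_cert (b c : ℝ) (hd : b^2 < 4*c) :
    ∃ G : ℝ[X], G ≠ 0 ∧ (∀ k, 0 ≤ G.coeff k) ∧
      ∀ k, 0 ≤ ((X^2 + C b * X + C c) * G).coeff k := by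
  have hc : 0 < c := by nlinarith [sq_nonneg b]
  obtain ⟨n, h1, h2⟩ := quad_key b c hd
  have hmon : ((X:ℝ[X]) + 1).Monic := by
    have := monic_X_add_C (1:ℝ)
    simpa using this
  refine ⟨((X:ℝ[X]) + 1)^n, (hmon.pow n).ne_zero, ?_, ?_⟩
  · intro k
    rw [coeff_X_add_one_pow]
    exact Nat.cast_nonneg _
  · have hexp : ((X:ℝ[X])^2 + C b * X + C c) * ((X:ℝ[X]) + 1)^n
        = ((X:ℝ[X]) + 1)^n * X^2 + C b * (((X:ℝ[X]) + 1)^n * X^1) + C c * ((X:ℝ[X]) + 1)^n := by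
      ring
    intro k
    rw [hexp, coeff_add, coeff_add, coeff_mul_X_pow', coeff_C_mul, coeff_mul_X_pow',
      coeff_C_mul]
    match k with
    | 0 =>
      simp only [coeff_X_add_one_pow]
      norm_num
      exact hc.le
    | 1 =>
      simp only [coeff_X_add_one_pow]
      norm_num
      simpa [Nat.choose_one_right] using h1
    | (j+2) =>
      have e1 : (2:ℕ) ≤ j + 2 := by omega
      have e2 : (1:ℕ) ≤ j + 2 := by omega
      rw [if_pos e1, if_pos e2]
      have e3 : j + 2 - 2 = j := by omega
      have e4 : j + 2 - 1 = j + 1 := by omega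
      rw [e3, e4]
      simp only [coeff_X_add_one_pow]
      have := h2 j
      linarith

-- quadratic normal form for a monic polynomial of natDegree 2
lemma monic_quad_form {p : ℝ[X]} (hp : p.Monic) (h2 : p.natDegree = 2) :
    p = X^2 + C (p.coeff 1) * X + C (p.coeff 0) := by
  have hlc : p.coeff 2 = 1 := by
    have := hp.coeff_natDegree
    rwa [h2] at this
  ext k
  match k with
  | 0 => simp
  | 1 => simp
  | 2 => simp [hlc, coeff_X_pow]
  | (k+3) =>
    have hz : p.coeff (k+3) = 0 := coeff_eq_zero_of_natDegree_lt (by omega)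
    rw [hz]
    simp [coeff_X_pow, coeff_C]

-- an irreducible monic quadratic has negative discriminant
lemma irred_quad_disc {p : ℝ[X]} (hp : p.Monic) (h2 : p.natDegree = 2) (hirr : Irreducible p) :
    (p.coeff 1)^2 < 4 * (p.coeff 0) := by
  set b := p.coeff 1
  set c := p.coeff 0
  by_contra hcon
  push_neg at hcon
  set r : ℝ := (-b + Real.sqrt (b^2 - 4*c)) / 2 with hr
  have hs : (Real.sqrt (b^2 - 4*c))^2 = b^2 - 4*c := Real.sq_sqrt (by linarith)
  have hroot : p.IsRoot r := by
    rw [monic_quad_form hp h2]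
    simp only [IsRoot, eval_add, eval_mul, eval_pow, eval_X, eval_C]
    rw [hr]
    nlinarith [hs]
  obtain ⟨q, hq⟩ := dvd_iff_isRoot.mpr hroot
  rcases hirr.isUnit_or_isUnit hq with h | h
  · exact Polynomial.not_isUnit_X_sub_C r h
  · have hdq : q.natDegree = 0 := natDegree_eq_zero_of_isUnit h
    have hq0 : q ≠ 0 := by
      rintro rfl
      rw [mul_zero] at hq
      exact hp.ne_zero hq
    have : p.natDegree = 1 := by
      rw [hq, natDegree_mul (X_sub_C_ne_zero r) hq0, natDegree_X_sub_C, hdq]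
    omega

lemma main_aux : ∀ d : ℕ, ∀ F : ℝ[X], F.natDegree = d → F.Monic →
    (∀ x : ℝ, 0 < x → 0 < F.eval x) →
    ∃ G : ℝ[X], G ≠ 0 ∧ (∀ k, 0 ≤ G.coeff k) ∧ ∀ k, 0 ≤ (F * G).coeff k := by
  intro d
  induction d using Nat.strong_induction_on with
  | _ d ih =>
  intro F hdeg hF hpos
  rcases Nat.eq_zero_or_pos d with hd0 | hdpos
  · subst hd0
    have hF1 : F = 1 := (hF.natDegree_eq_zero).mp hdeg
    refine ⟨1, one_ne_zero, ?_, ?_⟩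
    · intro k
      rcases Nat.eq_zero_or_pos k with rfl | hk
      · simp
      · simp [coeff_one, Nat.pos_iff_ne_zero.mp hk]
    · intro k
      rw [hF1, one_mul]
      rcases Nat.eq_zero_or_pos k with rfl | hk
      · simp
      · simp [coeff_one, Nat.pos_iff_ne_zero.mp hk]
  · -- get an irreducible monic factor
    have hFnotunit : ¬ IsUnit F := F.not_isUnit_of_natDegree_pos (hdeg ▸ hdpos)
    obtain ⟨p₀, hirr₀, hdvd₀⟩ :=
      WfDvdMonoid.exists_irreducible_factor hFnotunit hF.ne_zero
    classical
    set p := normalize p₀ with hpdef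
    have hpmonic : p.Monic := monic_normalize hirr₀.ne_zero
    have hpirr : Irreducible p := (normalize_associated p₀).symm.irreducible hirr₀
    have hpdvd : p ∣ F := (normalize_dvd_iff).mpr hdvd₀
    obtain ⟨Q, hFQ⟩ := hpdvd
    have hQmonic : Q.Monic := hpmonic.of_mul_monic_left (hFQ ▸ hF)
    have hpdegpos : 0 < p.natDegree := hpirr.natDegree_pos
    have hpdeg2 : p.natDegree ≤ 2 := hpirr.natDegree_le_two
    have hdegsum : F.natDegree = p.natDegree + Q.natDegree := by
      rw [hFQ]
      exact natDegree_mul hpmonic.ne_zero hQmonic.ne_zero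
    have hQlt : Q.natDegree < d := by omega
    -- positivity of p and certificate for p
    have hp_main : (∀ x : ℝ, 0 < x → 0 < p.eval x) ∧
        ∃ Gp : ℝ[X], Gp ≠ 0 ∧ (∀ k, 0 ≤ Gp.coeff k) ∧ ∀ k, 0 ≤ (p * Gp).coeff k := by
      interval_cases hpd : p.natDegree
      · -- degree 1
        have hform : p = X + C (p.coeff 0) := hpmonic.eq_X_add_C hpd
        set a := p.coeff 0 with ha
        have hanneg : 0 ≤ a := by
          by_contra hcona
          push_neg at hcona
          have hroot : F.eval (-a) = 0 := by
            rw [hFQ, eval_mul, hform]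
            simp
          have := hpos (-a) (by linarith)
          rw [hroot] at this
          exact lt_irrefl 0 this
        constructor
        · intro x hx
          rw [hform]
          simp only [eval_add, eval_X, eval_C]
          linarith
        · refine ⟨1, one_ne_zero, ?_, ?_⟩
          · intro k
            rcases Nat.eq_zero_or_pos k with rfl | hk
            · simp
            · simp [coeff_one, Nat.pos_iff_ne_zero.mp hk]
          · intro k
            rw [mul_one, hform]
            match k with
            | 0 => simpa using hanneg
            | 1 => simp
            | (k+2) => simp [coeff_X, coeff_C]
      · -- degree 2
        have hdisc : (p.coeff 1)^2 < 4 * (p.coeff 0) := irred_quad_disc hpmonic hpd hpirr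
        have hform : p = X^2 + C (p.coeff 1) * X + C (p.coeff 0) := monic_quad_form hpmonic hpd
        constructor
        · intro x _
          rw [hform]
          simp only [eval_add, eval_mul, eval_pow, eval_X, eval_C]
          nlinarith [sq_nonneg (x + p.coeff 1 / 2)]
        · obtain ⟨Gp, h1, h2, h3⟩ := quad_cert (p.coeff 1) (p.coeff 0) (by linarith)
          exact ⟨Gp, h1, h2, by rw [hform]; exact h3⟩
    obtain ⟨hppos, Gp, hGpne, hGpcoeff, hpGp⟩ := hp_main
    have hQpos : ∀ x : ℝ, 0 < x → 0 < Q.eval x := by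
      intro x hx
      have hFx := hpos x hx
      rw [hFQ, eval_mul] at hFx
      have hpx := hppos x hx
      nlinarith
    obtain ⟨G₁, hG₁ne, hG₁coeff, hQG₁⟩ := ih Q.natDegree hQlt Q rfl hQmonic hQpos
    refine ⟨Gp * G₁, mul_ne_zero hGpne hG₁ne, coeff_mul_nonneg hGpcoeff hG₁coeff, ?_⟩
    have hre : F * (Gp * G₁) = (p * Gp) * (Q * G₁) := by rw [hFQ]; ring
    rw [hre]
    exact coeff_mul_nonneg hpGp hQG₁

theorem stmt8 (F : Polynomial ℝ) (hF : F.Monic) (hpos : ∀ x : ℝ, 0 < x → 0 < F.eval x) :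
    ∃ G : Polynomial ℝ, G ≠ 0 ∧ (∀ k, 0 ≤ G.coeff k) ∧ ∀ k, 0 ≤ (F * G).coeff k := by
  exact main_aux F.natDegree F rfl hF hpos
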